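/- For every integer n ≥ 1, every p ∈ I_n, and every integer j ≥ 0: 0 < h_{p,j} < w_{p,j} and 0 < w_{p,j+1} < h_{p,j}. In particular all widths w_{p,j} and all heights h_{p,j} are positive (the partitioned rectangle is well defined). -/

import Mathlib

open Matrix

noncomputable section

/-- `M1 = [[1,1,0],[0,1,0],[0,0,1]]`. -/
def M1 : Matrix (Fin 3) (Fin 3) ℝ := !![1, 1, 0; 0, 1, 0; 0, 0, 1]

/-- `M2 = [[1,0,0],[1,1,1],[0,0,1]]`. -/
def M2 : Matrix (Fin 3) (Fin 3) ℝ := !![1, 0, 0; 1, 1, 1; 0, 0, 1]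

/-- `M3 = [[1,0,0],[0,1,0],[0,1,1]]`. -/
def M3 : Matrix (Fin 3) (Fin 3) ℝ := !![1, 0, 0; 0, 1, 0; 0, 1, 1]

/- A tuple `p = (p_n, p_n', q_n, …, p_1, p_1', q_1) ∈ ℕ₀^{3n}` is encoded by three
functions `P P' Q : Fin n → ℕ`, where the index `i : Fin n` corresponds to the
subscript `i + 1` (so `P ⟨0,_⟩ = p_1`, …, `P ⟨n-1,_⟩ = p_n`). -/

/-- The transition matrix `M_p = M1^{p_n} M3^{p_n'} M2^{q_n} ⋯ M1^{p_1} M3^{p_1'} M2^{q_1}`. -/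
def Mp (n : ℕ) (P P' Q : Fin n → ℕ) : Matrix (Fin 3) (Fin 3) ℝ :=
  ((List.finRange n).map fun i => M1 ^ P i.rev * M3 ^ P' i.rev * M2 ^ Q i.rev).prod

/-- Membership of the tuple `p` in `I_n`. -/
def memI (n : ℕ) (P P' Q : Fin n → ℕ) : Prop :=
  (∀ i, 0 < Q i) ∧ (∀ i, 0 < P i + P' i) ∧ (∃ j, 0 < P j) ∧ (∃ k, 0 < P' k)

/-- Finite continued fraction: `cf [a₁, …, a_m] x = 1/(a₁ + 1/(a₂ + ⋯ + 1/(a_m + x)))`. -/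
def cf (l : List ℕ) (x : ℝ) : ℝ := l.foldr (fun a y => 1 / (a + y)) x

/-- The (0-indexed) block index `k(j+1) - 1 = n - 1 - (j mod n)` used at step `j + 1`. -/
def blk (n : ℕ) (hn : 0 < n) (j : ℕ) : Fin n :=
  ⟨n - 1 - j % n, lt_of_le_of_lt (Nat.sub_le _ _) (Nat.sub_lt hn one_pos)⟩

/-- The sequence `(a₁, …, a_{2n}) = (p_n + p_n', q_n, …, p_1 + p_1', q_1)` as a list. -/
def aList (n : ℕ) (hn : 0 < n) (P P' Q : Fin n → ℕ) : List ℕ :=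
  (List.range n).flatMap fun i => [P (blk n hn i) + P' (blk n hn i), Q (blk n hn i)]

/-- `isH0 n hn P P' Q h0` says that `h0` is the number `h_{p,0}`: a real number in `(0,1)`
that is a fixed point of `x ↦ 1/(a₁ + 1/(a₂ + ⋯ + 1/(a_{2n} + x)))` (there is exactly one). -/
def isH0 (n : ℕ) (hn : 0 < n) (P P' Q : Fin n → ℕ) (h0 : ℝ) : Prop :=
  h0 ∈ Set.Ioo (0 : ℝ) 1 ∧ cf (aList n hn P P' Q) h0 = h0

/-- The pair `(w_{p,j}, h_{p,j})`, with `w_{p,0} = 1`, `h_{p,0} = h0`, and for `j ≥ 1`: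
`w_{p,j} = w_{p,j-1} − (p_{k(j)} + p'_{k(j)}) h_{p,j-1}`, `h_{p,j} = h_{p,j-1} − q_{k(j)} w_{p,j}`. -/
def wh (n : ℕ) (hn : 0 < n) (P P' Q : Fin n → ℕ) (h0 : ℝ) : ℕ → ℝ × ℝ
  | 0 => (1, h0)
  | j + 1 =>
    let prev := wh n hn P P' Q h0 j
    let b := blk n hn j
    let w := prev.1 - ((P b : ℝ) + (P' b : ℝ)) * prev.2
    (w, prev.2 - (Q b : ℝ) * w)

/-- The width `w_{p,j}`. -/
def wseq (n : ℕ) (hn : 0 < n) (P P' Q : Fin n → ℕ) (h0 : ℝ) (j : ℕ) : ℝ :=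
  (wh n hn P P' Q h0 j).1

/-- The height `h_{p,j}`. -/
def hseq (n : ℕ) (hn : 0 < n) (P P' Q : Fin n → ℕ) (h0 : ℝ) (j : ℕ) : ℝ :=
  (wh n hn P P' Q h0 j).2

/-- The split ratio `s_p = Σ_{i=0}^∞ p_{k(i+1)} h_{p,i}`. -/
def splitRatio (n : ℕ) (hn : 0 < n) (P P' Q : Fin n → ℕ) (h0 : ℝ) : ℝ :=
  ∑' i : ℕ, (P (blk n hn i) : ℝ) * hseq n hn P P' Q h0 i

/-- The reindexing realizing the shift `T`: the tuple `T(p)` is given by the functions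
`P ∘ shiftIdx n hn`, `P' ∘ shiftIdx n hn`, `Q ∘ shiftIdx n hn`. -/
def shiftIdx (n : ℕ) (hn : 0 < n) (i : Fin n) : Fin n :=
  ⟨(i.val + (n - 1)) % n, Nat.mod_lt _ hn⟩

namespace Stmt3Aux

lemma cf_cons (a : ℕ) (l : List ℕ) (x : ℝ) : cf (a :: l) x = 1 / (a + cf l x) := rfl

lemma cf_mem (L : List ℕ) (hL : ∀ a ∈ L, 1 ≤ a) (x : ℝ) (hx : x ∈ Set.Ioo (0:ℝ) 1) :
    cf L x ∈ Set.Ioo (0:ℝ) 1 := by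
  induction L with
  | nil => exact hx
  | cons a L ih =>
    have h1 : (1:ℝ) ≤ a := by exact_mod_cast hL a (by simp)
    obtain ⟨hp, hl⟩ := ih fun b hb => hL b (by simp [hb])
    rw [cf_cons]
    constructor
    · positivity
    · rw [div_lt_one (by linarith)]; linarith

lemma drop_flatMap (g : ℕ → List ℕ) (hg : ∀ i, (g i).length = 2) :
    ∀ (k s m : ℕ), k ≤ m →
      ((List.range' s m).flatMap g).drop (2*k) = (List.range' (s+k) (m-k)).flatMap g := by
  intro k
  induction k with
  | zero => simp
  | succ k ih =>
    intro s m hk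
    obtain ⟨m', rfl⟩ : ∃ m', m = m'+1 := ⟨m-1, by omega⟩
    rw [List.range'_succ, List.flatMap_cons]
    have h2 : 2 * (k+1) = (g s).length + 2*k := by rw [hg]; ring
    rw [h2, List.drop_length_add_append, ih (s+1) m' (by omega)]
    rw [show s+1+k = s+(k+1) by omega, show m' - k = m'+1-(k+1) by omega]

lemma blk_mod (n : ℕ) (hn : 0 < n) (j : ℕ) : blk n hn (j % n) = blk n hn j := by
  simp [blk, Nat.mod_mod_of_dvd]

lemma aList_drop (n : ℕ) (hn : 0 < n) (P P' Q : Fin n → ℕ) (k : ℕ) (hk : k ≤ n) :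
    (aList n hn P P' Q).drop (2*k) =
      (List.range' k (n-k)).flatMap
        (fun i => [P (blk n hn i) + P' (blk n hn i), Q (blk n hn i)]) := by
  rw [aList, List.range_eq_range']
  simpa using drop_flatMap
    (fun i => [P (blk n hn i) + P' (blk n hn i), Q (blk n hn i)]) (fun i => rfl) k 0 n hk

lemma aList_drop_succ (n : ℕ) (hn : 0 < n) (P P' Q : Fin n → ℕ) (k : ℕ) (hk : k < n) :
    (aList n hn P P' Q).drop (2*k) =
      (P (blk n hn k) + P' (blk n hn k)) :: Q (blk n hn k) ::
        (aList n hn P P' Q).drop (2*(k+1)) := by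
  rw [aList_drop n hn P P' Q k hk.le, aList_drop n hn P P' Q (k+1) hk,
      show n - k = (n-(k+1))+1 by omega, List.range'_succ, List.flatMap_cons]
  rfl

lemma aList_drop_n (n : ℕ) (hn : 0 < n) (P P' Q : Fin n → ℕ) :
    (aList n hn P P' Q).drop (2*n) = [] := by
  rw [aList_drop n hn P P' Q n le_rfl]
  simp

end Stmt3Aux

open Stmt3Aux in
/-- for `p ∈ I_n` and every `j ≥ 0`: `0 < h_{p,j} < w_{p,j}` and
`0 < w_{p,j+1} < h_{p,j}`. -/
theorem stmt3 (n : ℕ) (hn : 0 < n) (P P' Q : Fin n → ℕ) (hI : memI n P P' Q)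
    (h0 : ℝ) (hh0 : isH0 n hn P P' Q h0) :
    ∀ j : ℕ,
      0 < hseq n hn P P' Q h0 j ∧
      hseq n hn P P' Q h0 j < wseq n hn P P' Q h0 j ∧
      0 < wseq n hn P P' Q h0 (j + 1) ∧
      wseq n hn P P' Q h0 (j + 1) < hseq n hn P P' Q h0 j := by
  obtain ⟨hh0m, hfix⟩ := hh0
  set l := aList n hn P P' Q with hl
  -- all entries of `l` are at least 1
  have hl1 : ∀ a ∈ l, 1 ≤ a := by
    intro a ha
    rw [hl, aList, List.mem_flatMap] at ha
    obtain ⟨i, _, hmem⟩ := ha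
    simp only [List.mem_cons, List.mem_singleton, List.not_mem_nil, or_false] at hmem
    rcases hmem with h | h
    · subst h; exact hI.2.1 (blk n hn i)
    · subst h; exact hI.1 (blk n hn i)
  -- the continued-fraction tails
  set u : ℕ → ℝ := fun j => cf (l.drop (2*(j % n))) h0 with hu_def
  set A : ℕ → ℝ := fun j => (P (blk n hn j) : ℝ) + (P' (blk n hn j) : ℝ) with hA_def
  set B : ℕ → ℝ := fun j => (Q (blk n hn j) : ℝ) with hB_def
  have hA1 : ∀ j, (1:ℝ) ≤ A j := by
    intro j
    have h := hI.2.1 (blk n hn j)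
    show (1:ℝ) ≤ (P (blk n hn j) : ℝ) + (P' (blk n hn j) : ℝ)
    exact_mod_cast h
  have hB1 : ∀ j, (1:ℝ) ≤ B j := by
    intro j
    have h := hI.1 (blk n hn j)
    show (1:ℝ) ≤ (Q (blk n hn j) : ℝ)
    exact_mod_cast h
  have hu_mem : ∀ j, u j ∈ Set.Ioo (0:ℝ) 1 := by
    intro j
    exact cf_mem _ (fun a ha => hl1 a (List.mem_of_mem_drop ha)) h0 hh0m
  have hu_rec : ∀ j, u j = 1 / (A j + 1 / (B j + u (j+1))) := by
    intro j
    have hk : j % n < n := Nat.mod_lt _ hn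
    have hmod : (j+1) % n = (j % n + 1) % n := by
      conv_lhs => rw [Nat.add_mod]
      conv_rhs => rw [Nat.add_mod]
      rw [Nat.mod_mod_of_dvd j dvd_rfl]
    have e3 : u (j+1) = cf (l.drop (2*((j % n + 1) % n))) h0 := by
      rw [show u (j+1) = cf (l.drop (2*((j+1) % n))) h0 from rfl, hmod]
    have e2 : cf (l.drop (2*((j % n)+1))) h0 = u (j+1) := by
      by_cases h : j % n + 1 = n
      · rw [e3, h, Nat.mod_self]
        simp only [Nat.mul_zero, List.drop_zero]
        rw [hl, aList_drop_n n hn P P' Q]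
        exact hfix.symm
      · rw [e3, Nat.mod_eq_of_lt (show j % n + 1 < n by omega)]
    have e1 : u j = cf (l.drop (2*(j % n))) h0 := rfl
    have hAj : A j = ((P (blk n hn j) + P' (blk n hn j) : ℕ) : ℝ) := by
      simp only [hA_def]; push_cast; ring
    have hBj : B j = ((Q (blk n hn j) : ℕ) : ℝ) := by simp only [hB_def]
    rw [e1, hl, aList_drop_succ n hn P P' Q (j % n) hk, cf_cons, cf_cons, blk_mod, ← hl, e2,
      hAj, hBj]
  set v : ℕ → ℝ := fun j => 1 / (B j + u (j+1)) with hv_def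
  have hv_mem : ∀ j, v j ∈ Set.Ioo (0:ℝ) 1 := by
    intro j
    obtain ⟨h1, h2⟩ := hu_mem (j+1)
    have hb := hB1 j
    constructor
    · rw [hv_def]; positivity
    · rw [hv_def]
      simp only
      rw [div_lt_one (by linarith)]; linarith
  have hu_eq : ∀ j, u j = 1 / (A j + v j) := fun j => hu_rec j
  have huv : ∀ j, u j * (A j + v j) = 1 := by
    intro j
    obtain ⟨hv1, _⟩ := hv_mem j
    have ha := hA1 j
    rw [hu_eq j]
    field_simp
  have hvu : ∀ j, v j * (B j + u (j+1)) = 1 := by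
    intro j
    obtain ⟨h1, _⟩ := hu_mem (j+1)
    have hb := hB1 j
    rw [hv_def]
    field_simp
  -- the main invariant
  have main : ∀ j, 0 < (wh n hn P P' Q h0 j).1 ∧
      (wh n hn P P' Q h0 j).2 = u j * (wh n hn P P' Q h0 j).1 := by
    intro j
    induction j with
    | zero =>
      refine ⟨one_pos, ?_⟩
      have h1 : u 0 = h0 := by
        show cf (l.drop (2*(0 % n))) h0 = h0
        simpa using hfix
      simp [wh, h1]
    | succ j ih =>
      obtain ⟨hw, hh⟩ := ih
      have hwh1 : (wh n hn P P' Q h0 (j+1)).1 =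
          (wh n hn P P' Q h0 j).1 - A j * (wh n hn P P' Q h0 j).2 := by
        simp [wh, hA_def]
      have hwh2 : (wh n hn P P' Q h0 (j+1)).2 =
          (wh n hn P P' Q h0 j).2 - B j * (wh n hn P P' Q h0 (j+1)).1 := by
        simp [wh, hB_def, hA_def]
      have hw' : (wh n hn P P' Q h0 (j+1)).1 = u j * v j * (wh n hn P P' Q h0 j).1 := by
        rw [hwh1, hh]
        linear_combination (-(wh n hn P P' Q h0 j).1) * huv j
      constructor
      · rw [hw']
        have := (hu_mem j).1
        have := (hv_mem j).1
        positivity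
      · rw [hwh2, hw', hh]
        linear_combination (-(u j * (wh n hn P P' Q h0 j).1)) * hvu j
  -- conclusion
  intro j
  obtain ⟨hwj, hhj⟩ := main j
  obtain ⟨hwj1, hhj1⟩ := main (j+1)
  obtain ⟨hu0, hu1⟩ := hu_mem j
  obtain ⟨hv0, hv1⟩ := hv_mem j
  have hwh1 : (wh n hn P P' Q h0 (j+1)).1 =
      (wh n hn P P' Q h0 j).1 - A j * (wh n hn P P' Q h0 j).2 := by
    simp [wh, hA_def]
  have hw' : (wh n hn P P' Q h0 (j+1)).1 = u j * v j * (wh n hn P P' Q h0 j).1 := by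
    rw [hwh1, hhj]
    linear_combination (-(wh n hn P P' Q h0 j).1) * huv j
  refine ⟨?_, ?_, hwj1, ?_⟩
  · rw [hseq, hhj]; positivity
  · rw [hseq, wseq, hhj]
    nlinarith
  · rw [wseq, hseq, hw', hhj]
    nlinarith
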